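/- Let (A, ∧, ∼, ∽, 1) be a pseudo equality algebra. Every state-morphism operator σ on A is an internal state of type I on A, i.e., σ satisfies (IS1), (IS2), (IS3) and (IS4). -/
import Mathlib


/-- A pseudo equality algebra (JK-algebra): a meet-semilattice with top element `⊤`
(playing the role of `1`) equipped with two equality operations `sim` (`∼`) and
`bsim` (`∽`) satisfying axioms (A2)–(A7). -/
class PseudoEqualityAlgebra (A : Type*) extends SemilatticeInf A, OrderTop A where
  sim : A → A → A
  bsim : A → A → A
  sim_self : ∀ x : A, sim x x = ⊤
  bsim_self : ∀ x : A, bsim x x = ⊤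
  sim_top : ∀ x : A, sim x ⊤ = x
  top_bsim : ∀ x : A, bsim ⊤ x = x
  A4a : ∀ x y z : A, x ≤ y → y ≤ z → sim x z ≤ sim y z
  A4b : ∀ x y z : A, x ≤ y → y ≤ z → sim x z ≤ sim x y
  A4c : ∀ x y z : A, x ≤ y → y ≤ z → bsim z x ≤ bsim z y
  A4d : ∀ x y z : A, x ≤ y → y ≤ z → bsim z x ≤ bsim y x
  A5a : ∀ x y z : A, sim x y ≤ sim (x ⊓ z) (y ⊓ z)
  A5b : ∀ x y z : A, bsim x y ≤ bsim (x ⊓ z) (y ⊓ z)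
  A6a : ∀ x y z : A, sim x y ≤ bsim (sim z x) (sim z y)
  A6b : ∀ x y z : A, bsim x y ≤ sim (bsim x z) (bsim y z)
  A7a : ∀ x y z : A, sim x y ≤ sim (sim x z) (sim y z)
  A7b : ∀ x y z : A, bsim x y ≤ bsim (bsim z x) (bsim z y)

open PseudoEqualityAlgebra

section Aux
variable {A : Type*} [PseudoEqualityAlgebra A]

private lemma aux_le_sim_bsim (y z : A) : y ≤ sim z (bsim y z) := by
  have h := A6b (⊤ : A) y z
  simpa [top_bsim] using h

private lemma aux_le_bsim_sim (x z : A) : x ≤ bsim (sim z x) z := by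
  have h := A6a x ⊤ z
  simpa [sim_top] using h

private lemma key1 (x y : A) :
    sim (x ⊓ y) x = sim y (bsim (sim (x ⊓ y) x) y) := by
  set m := x ⊓ y with hm
  set a := sim m x with ha
  have hya : y ≤ a := by
    have h := A5a y ⊤ x
    simpa [ha, hm, sim_top, inf_comm] using h
  have hxb : x ≤ bsim a y := by
    have h1 : x ≤ bsim a m := aux_le_bsim_sim x m
    exact h1.trans (A4c m y a inf_le_right hya)
  apply le_antisymm
  · exact aux_le_sim_bsim a y
  · have h := A5a y (bsim a y) x
    have h2 : y ⊓ x = m := by rw [hm, inf_comm]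
    have h3 : bsim a y ⊓ x = x := inf_eq_right.mpr hxb
    rw [h2, h3] at h
    exact h

private lemma key2 (x y : A) :
    bsim x (x ⊓ y) = bsim (sim y (bsim x (x ⊓ y))) y := by
  set m := x ⊓ y with hm
  set a := bsim x m with ha
  have hya : y ≤ a := by
    have h := A5b (⊤ : A) y x
    simpa [ha, hm, top_bsim, inf_comm] using h
  have hxc : x ≤ sim y a := by
    have h1 : x ≤ sim m a := aux_le_sim_bsim x m
    exact h1.trans (A4a m y a inf_le_right hya)
  apply le_antisymm
  · exact aux_le_bsim_sim a y
  · have h := A5b (sim y a) y x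
    have h2 : y ⊓ x = m := by rw [hm, inf_comm]
    have h3 : sim y a ⊓ x = x := inf_eq_right.mpr hxc
    rw [h2, h3] at h
    exact h

end Aux


/-- An internal state of type I on a pseudo equality algebra:
axioms (IS1), (IS2), (IS3), (IS4). -/
def IsInternalStateI {A : Type*} [PseudoEqualityAlgebra A] (σ : A → A) : Prop :=
  (∀ x y : A, x ≤ y → σ x ≤ σ y) ∧
  (∀ x y : A,
    σ (sim (x ⊓ y) x) = sim (σ y) (σ (bsim (sim (x ⊓ y) x) y)) ∧
    σ (bsim x (x ⊓ y)) = bsim (σ (sim y (bsim x (x ⊓ y)))) (σ y)) ∧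
  (∀ x y : A,
    σ (sim (σ x) (σ y)) = sim (σ x) (σ y) ∧
    σ (bsim (σ x) (σ y)) = bsim (σ x) (σ y)) ∧
  (∀ x y : A, σ (σ x ⊓ σ y) = σ x ⊓ σ y)

/-- An internal state of type II on a pseudo equality algebra:
axioms (IS1), (IS2'), (IS3), (IS4). -/
def IsInternalStateII {A : Type*} [PseudoEqualityAlgebra A] (σ : A → A) : Prop :=
  (∀ x y : A, x ≤ y → σ x ≤ σ y) ∧
  (∀ x y : A,
    σ (sim (x ⊓ y) x) = sim (σ y) (σ (bsim (sim (x ⊓ y) y) x)) ∧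
    σ (bsim x (x ⊓ y)) = bsim (σ (sim x (bsim y (x ⊓ y)))) (σ y)) ∧
  (∀ x y : A,
    σ (sim (σ x) (σ y)) = sim (σ x) (σ y) ∧
    σ (bsim (σ x) (σ y)) = bsim (σ x) (σ y)) ∧
  (∀ x y : A, σ (σ x ⊓ σ y) = σ x ⊓ σ y)

/-- Theorem 7.6: every state-morphism operator on a pseudo equality algebra `A` is an
internal state of type I on `A`. -/
theorem stmt18 {A : Type*} [PseudoEqualityAlgebra A] (σ : A → A)
    (hSM1 : ∀ x y : A, σ (sim x y) = sim (σ x) (σ y))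
    (hSM2 : ∀ x y : A, σ (bsim x y) = bsim (σ x) (σ y))
    (hSM3 : ∀ x y : A, σ (x ⊓ y) = σ x ⊓ σ y)
    (hSM4 : ∀ x : A, σ (σ x) = σ x) :
    IsInternalStateI σ := by
  refine ⟨?_, ?_, ?_, ?_⟩
  · intro x y hxy
    have : σ x ⊓ σ y = σ x := by rw [← hSM3, inf_eq_left.mpr hxy]
    exact inf_eq_left.mp this
  · intro x y
    constructor
    · simp only [hSM1, hSM2, hSM3]
      exact key1 (σ x) (σ y)
    · simp only [hSM1, hSM2, hSM3]
      exact key2 (σ x) (σ y)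
  · intro x y
    constructor
    · rw [hSM1, hSM4, hSM4]
    · rw [hSM2, hSM4, hSM4]
  · intro x y
    rw [hSM3, hSM4, hSM4]
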